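/- Let O be the ring of integers of a finite extension K of ℚ_ℓ with uniformizer λ, ramification index e, and valuation v normalized by v(ℓ) = 1. Let k = 2 and suppose α, β, γ, δ ∈ O satisfy: αδ − βγ = ℓ·w for a unit w ∈ O^×, v(α) = 1, v(β) > 1, α² ≡ ℓ²·w (mod λ^{2e+1}). Then (α + δ)² ≡ w (mod λ). -/

import Mathlib

/-- The final congruence step of Proposition 4.2 for `k = 2`: in a discrete valuation ring
with uniformizer `ϖ` and `ℓ = uℓ·ϖ^e`, the hypotheses `αδ − βγ = ℓw`, `v(α) = 1`,
`v(β) > 1` and `α² ≡ ℓ²w (mod ϖ^{2e+1})` imply `(α + δ)² ≡ w (mod ϖ)`. -/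
theorem stmt_9 {O : Type*} [CommRing O] [IsDomain O] [IsDiscreteValuationRing O]
    (ϖ : O) (hϖ : Irreducible ϖ) (e : ℕ) (he : 1 ≤ e)
    (ℓ uℓ : O) (huℓ : IsUnit uℓ) (hℓ : ℓ = uℓ * ϖ ^ e)
    (α β γ δ w : O) (hw : IsUnit w)
    (hdet : α * δ - β * γ = ℓ * w)
    (hα1 : ϖ ^ e ∣ α) (hα2 : ¬ ϖ ^ (e + 1) ∣ α)
    (hβ : ϖ ^ (e + 1) ∣ β)
    (hcong : ϖ ^ (2 * e + 1) ∣ α ^ 2 - ℓ ^ 2 * w) :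
    ϖ ∣ (α + δ) ^ 2 - w := by
  have hϖ0 : ϖ ≠ 0 := hϖ.ne_zero
  have hprime : Prime ϖ := hϖ.prime
  obtain ⟨a, ha⟩ := hα1
  obtain ⟨b, hb⟩ := hβ
  have hπa : ¬ ϖ ∣ a := by
    rintro ⟨c, hc⟩
    exact hα2 ⟨c, by rw [ha, hc]; ring⟩
  have hδ : a * δ = uℓ * w + ϖ * b * γ := by
    have h : ϖ ^ e * (a * δ) = ϖ ^ e * (uℓ * w + ϖ * b * γ) := by
      have := hdet
      rw [ha, hb, hℓ] at this
      linear_combination this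
    exact mul_left_cancel₀ (pow_ne_zero e hϖ0) h
  have key2 : ϖ ∣ a ^ 2 - uℓ ^ 2 * w := by
    obtain ⟨c, hc⟩ := hcong
    refine ⟨c, mul_left_cancel₀ (pow_ne_zero (2 * e) hϖ0) ?_⟩
    have h1 : α ^ 2 - ℓ ^ 2 * w = ϖ ^ (2 * e) * (a ^ 2 - uℓ ^ 2 * w) := by
      rw [ha, hℓ]; ring
    rw [← h1, hc]
    ring
  have key3 : ϖ ∣ a ^ 2 * (δ ^ 2 - w) := by
    obtain ⟨c, hc⟩ := key2
    refine ⟨2 * (uℓ * w) * (b * γ) + ϖ * (b * γ) ^ 2 - c * w, ?_⟩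
    have h : a ^ 2 * (δ ^ 2 - w) = (a * δ) ^ 2 - uℓ ^ 2 * w ^ 2 - (a ^ 2 - uℓ ^ 2 * w) * w := by
      ring
    rw [h, hδ, hc]
    ring
  have key4 : ϖ ∣ δ ^ 2 - w := by
    rcases hprime.dvd_mul.mp key3 with h | h
    · exact absurd (hprime.dvd_of_dvd_pow h) hπa
    · exact h
  have hα : ϖ ∣ α := by
    rw [ha]
    exact (dvd_pow_self ϖ (by omega : e ≠ 0)).mul_right a
  have h : (α + δ) ^ 2 - w = (δ ^ 2 - w) + α * (α + 2 * δ) := by ring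
  rw [h]
  exact dvd_add key4 (hα.mul_right _)
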